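/- Let n ≥ 1 be an integer, let X be a set with |X| = 3n, and let F₁,…,F_m ⊆ X be subsets each of size exactly 3 such that every element x ∈ X belongs to at least 3(n+2) of the sets F_i. Set M = 3n+1 and let G be the Exact-3-Cover gadget graph built from this data. Then there exists F' ⊆ {1,…,m} such that every element of X belongs to F_i for exactly one i ∈ F', if and only if G has a connected cut of size at least (m−n)² + 3m − 3n + (m−2n)·M, i.e., there exists a nonempty set S of vertices of G such that the induced subgraph G[S] is connected and at least (m−n)² + 3m − 3n + (m−2n)·M edges of G have exactly one endpoint in S. -/

import Mathlib

/-- The set of edges of `G` having exactly one endpoint in `S` (the cutset `δ(S)`). -/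
def cutEdges {V : Type*} (G : SimpleGraph V) (S : Set V) : Set (Sym2 V) :=
  {e | e ∈ G.edgeSet ∧ ∃ u ∈ S, ∃ v, v ∉ S ∧ e = s(u, v)}

/-- The vertex set of the Exact-3-Cover gadget graph: the clique vertices
`u₁, …, u_{2(m−n)}` (0-indexed), the ground set `X`, and the pendant sets
`Y_{m+1}, …, Y_{2(m−n)}`, each of size `M` (indexed by `Fin (m − 2n) × Fin M`). -/
abbrev XCVert (n m M : ℕ) (X : Type*) : Type _ :=
  Fin (2 * (m - n)) ⊕ (X ⊕ (Fin (m - 2 * n) × Fin M))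

/-- The Exact-3-Cover gadget graph: `U` is a clique, `u_i` (for `i < m`, 0-indexed) is
adjacent to exactly the elements of `F i`, and `u_{m+j}` is adjacent to exactly the `M`
vertices of the pendant block `Y_j`; `X ∪ Y` is an independent set. -/
def xcGadget (n m M : ℕ) (X : Type*) (F : ℕ → Finset X) :
    SimpleGraph (XCVert n m M X) :=
  SimpleGraph.fromRel (fun a b =>
    (∃ i j : Fin (2 * (m - n)), a = Sum.inl i ∧ b = Sum.inl j) ∨
    (∃ (i : Fin (2 * (m - n))) (x : X),
      a = Sum.inl i ∧ b = Sum.inr (Sum.inl x) ∧ (i : ℕ) < m ∧ x ∈ F (i : ℕ)) ∨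
    (∃ (i : Fin (2 * (m - n))) (p : Fin (m - 2 * n) × Fin M),
      a = Sum.inl i ∧ b = Sum.inr (Sum.inr p) ∧ (i : ℕ) = m + (p.1 : ℕ)))

section Lemmas

lemma ncard_cutEdges_eq_sum {V : Type*} [Fintype V] [DecidableEq V]
    (G : SimpleGraph V) [DecidableRel G.Adj] (S : Set V) [DecidablePred (· ∈ S)] :
    (cutEdges G S).ncard =
      ∑ v : V, ∑ w : V, if v ∈ S ∧ w ∉ S ∧ G.Adj v w then 1 else 0 := by
  have himg : cutEdges G S =
      (fun p : V × V => s(p.1, p.2)) '' {p : V × V | p.1 ∈ S ∧ p.2 ∉ S ∧ G.Adj p.1 p.2} := by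
    ext e
    constructor
    · rintro ⟨he, u, hu, v, hv, rfl⟩
      exact ⟨(u, v), ⟨hu, hv, he⟩, rfl⟩
    · rintro ⟨⟨u, v⟩, ⟨hu, hv, hadj⟩, rfl⟩
      exact ⟨hadj, u, hu, v, hv, rfl⟩
  have hinj : Set.InjOn (fun p : V × V => s(p.1, p.2))
      {p : V × V | p.1 ∈ S ∧ p.2 ∉ S ∧ G.Adj p.1 p.2} := by
    rintro ⟨u, v⟩ ⟨hu, hv, -⟩ ⟨u', v'⟩ ⟨hu', hv', -⟩ h
    simp only [Sym2.eq, Sym2.rel_iff', Prod.mk.injEq, Prod.swap_prod_mk] at h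
    rcases h with ⟨rfl, rfl⟩ | ⟨rfl, rfl⟩
    · rfl
    · exact absurd hu' hv
  rw [himg, Set.ncard_image_of_injOn hinj, Set.ncard_eq_toFinset_card',
    Set.toFinset_setOf, Finset.card_filter, Fintype.sum_prod_type]

variable {n m M : ℕ} {X : Type*} {F : ℕ → Finset X}

lemma adj_inl_inl {i j : Fin (2 * (m - n))} :
    (xcGadget n m M X F).Adj (Sum.inl i) (Sum.inl j) ↔ i ≠ j := by
  simp [xcGadget, SimpleGraph.fromRel_adj]

lemma adj_inl_x {i : Fin (2 * (m - n))} {x : X} :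
    (xcGadget n m M X F).Adj (Sum.inl i) (Sum.inr (Sum.inl x)) ↔ (i : ℕ) < m ∧ x ∈ F i := by
  simp [xcGadget, SimpleGraph.fromRel_adj]

lemma adj_inl_y {i : Fin (2 * (m - n))} {p : Fin (m - 2 * n) × Fin M} :
    (xcGadget n m M X F).Adj (Sum.inl i) (Sum.inr (Sum.inr p)) ↔ (i : ℕ) = m + (p.1 : ℕ) := by
  simp only [xcGadget, SimpleGraph.fromRel_adj]
  simp

lemma not_adj_inr_inr {a b : X ⊕ (Fin (m - 2 * n) × Fin M)} :
    ¬ (xcGadget n m M X F).Adj (Sum.inr a) (Sum.inr b) := by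
  simp [xcGadget, SimpleGraph.fromRel_adj]

lemma adj_x_inl {i : Fin (2 * (m - n))} {x : X} :
    (xcGadget n m M X F).Adj (Sum.inr (Sum.inl x)) (Sum.inl i) ↔ (i : ℕ) < m ∧ x ∈ F i := by
  rw [SimpleGraph.adj_comm]; exact adj_inl_x

lemma adj_y_inl {i : Fin (2 * (m - n))} {p : Fin (m - 2 * n) × Fin M} :
    (xcGadget n m M X F).Adj (Sum.inr (Sum.inr p)) (Sum.inl i) ↔ (i : ℕ) = m + (p.1 : ℕ) := by
  rw [SimpleGraph.adj_comm]; exact adj_inl_y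

lemma card_filter_fin (N : ℕ) (P : ℕ → Prop) [DecidablePred P] :
    (Finset.univ.filter (fun i : Fin N => P i.val)).card = ((Finset.range N).filter P).card := by
  rw [Finset.card_filter, Finset.card_filter,
    ← Fin.sum_univ_eq_sum_range (fun i => if P i then 1 else 0)]

lemma sum_card_filter_mem {X : Type*} [Fintype X] [DecidableEq X] (F : ℕ → Finset X)
    (t : Finset ℕ) :
    ∑ x : X, (t.filter (fun i => x ∈ F i)).card = ∑ i ∈ t, (F i).card := by
  simp only [Finset.card_filter]
  rw [Finset.sum_comm]
  refine Finset.sum_congr rfl fun i _ => ?_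
  rw [Finset.sum_ite_mem]
  simp

lemma exists_adj_of_connected {V : Type*} {G : SimpleGraph V} {S : Set V}
    (h : (G.induce S).Connected) {v u : V} (hv : v ∈ S) (hu : u ∈ S) (hne : u ≠ v) :
    ∃ w ∈ S, G.Adj v w := by
  obtain ⟨p⟩ := h.preconnected ⟨v, hv⟩ ⟨u, hu⟩
  have hnn : ¬ p.Nil := SimpleGraph.Walk.not_nil_of_ne (by simp [Subtype.ext_iff, hne.symm])
  have hadj := p.adj_snd hnn
  exact ⟨(p.getVert 1 : V), (p.getVert 1).2, by simpa using hadj⟩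

lemma eq_singleton_of_no_adj {V : Type*} {G : SimpleGraph V} {S : Set V}
    (h : (G.induce S).Connected) {v : V} (hv : v ∈ S)
    (hno : ∀ w ∈ S, ¬ G.Adj v w) : S = {v} := by
  ext u
  simp only [Set.mem_singleton_iff]
  constructor
  · intro hu
    by_contra hne
    obtain ⟨w, hw, hadj⟩ := exists_adj_of_connected h hv hu hne
    exact hno w hw hadj
  · rintro rfl; exact hv

end Lemmas

lemma quad_le (a K : ℕ) (h : a ≤ 2 * K) : a * (2 * K - a) ≤ K ^ 2 := by
  obtain ⟨b, hb⟩ : ∃ b, 2 * K - a = b := ⟨_, rfl⟩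
  have hab : a + b = 2 * K := by omega
  rw [hb]
  have habZ : (a : ℤ) + (b : ℤ) = 2 * (K : ℤ) := by exact_mod_cast hab
  have hZ : (a : ℤ) * (b : ℤ) ≤ (K : ℤ) ^ 2 := by nlinarith [sq_nonneg ((a : ℤ) - (K : ℤ))]
  exact_mod_cast hZ

lemma quad_lt (a K c : ℕ) (h : a ≤ 2 * K) (h2 : K + c ≤ a) :
    a * (2 * K - a) + c * c ≤ K ^ 2 := by
  obtain ⟨b, hb⟩ : ∃ b, 2 * K - a = b := ⟨_, rfl⟩
  have hab : a + b = 2 * K := by omega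
  rw [hb]
  have habZ : (a : ℤ) + (b : ℤ) = 2 * (K : ℤ) := by exact_mod_cast hab
  have h2Z : (K : ℤ) + (c : ℤ) ≤ (a : ℤ) := by exact_mod_cast h2
  have hZ : (a : ℤ) * (b : ℤ) + (c : ℤ) * (c : ℤ) ≤ (K : ℤ) ^ 2 := by
    nlinarith [sq_nonneg ((a : ℤ) - (K : ℤ) - (c : ℤ))]
  exact_mod_cast hZ

lemma quad_ne (a K : ℕ) (h : a ≤ 2 * K) (h2 : a ≠ K) : a * (2 * K - a) + 1 ≤ K ^ 2 := by
  obtain ⟨b, hb⟩ : ∃ b, 2 * K - a = b := ⟨_, rfl⟩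
  have hab : a + b = 2 * K := by omega
  rw [hb]
  have habZ : (a : ℤ) + (b : ℤ) = 2 * (K : ℤ) := by exact_mod_cast hab
  have hneZ : (a : ℤ) - (K : ℤ) ≠ 0 := fun hc => h2 (by exact_mod_cast sub_eq_zero.mp hc)
  have habs : (a : ℤ) - (K : ℤ) ≤ -1 ∨ 1 ≤ (a : ℤ) - (K : ℤ) := by omega
  have hZ : (a : ℤ) * (b : ℤ) + 1 ≤ (K : ℤ) ^ 2 := by
    rcases habs with hx | hx
    · nlinarith
    · nlinarith
  exact_mod_cast hZ

lemma mul_big (n : ℕ) : 3 * n < (2 * n + 2) * (2 * n + 2) := by nlinarith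

lemma two_lt_sq (K : ℕ) (h : 8 ≤ K) : 2 * K + 1 < K ^ 2 := by nlinarith

lemma m_bound (n m : ℕ) (X : Type*) [Fintype X] [DecidableEq X] (hX : Fintype.card X = 3 * n)
    (F : ℕ → Finset X) (hF : ∀ i < m, (F i).card = 3)
    (hcov : ∀ x : X, 3 * (n + 2) ≤ ((Finset.range m).filter (fun i => x ∈ F i)).card) :
    3 * n ^ 2 + 6 * n ≤ m := by
  classical
  have h1 : (3 * n) * (3 * (n + 2)) ≤
      ∑ x : X, ((Finset.range m).filter (fun i => x ∈ F i)).card := by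
    calc (3 * n) * (3 * (n + 2)) = ∑ _x : X, 3 * (n + 2) := by
          rw [Finset.sum_const, Finset.card_univ, hX, smul_eq_mul]
      _ ≤ _ := Finset.sum_le_sum fun x _ => hcov x
  have h2 : ∑ x : X, ((Finset.range m).filter (fun i => x ∈ F i)).card = 3 * m := by
    rw [sum_card_filter_mem]
    rw [Finset.sum_congr rfl (fun i hi => hF i (Finset.mem_range.mp hi))]
    simp [mul_comm]
  rw [h2] at h1
  nlinarith

lemma xc_forward (n m : ℕ) (hn : 1 ≤ n)
    (X : Type*) [Fintype X] [DecidableEq X] (hX : Fintype.card X = 3 * n)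
    (F : ℕ → Finset X) (hF : ∀ i < m, (F i).card = 3)
    (hcov : ∀ x : X, 3 * (n + 2) ≤ ((Finset.range m).filter (fun i => x ∈ F i)).card)
    (F' : Finset ℕ) (hsub : F' ⊆ Finset.range m) (hcovF : ∀ x : X, ∃! i, i ∈ F' ∧ x ∈ F i) :
    ∃ S : Set (XCVert n m (3 * n + 1) X), S.Nonempty ∧
        ((xcGadget n m (3 * n + 1) X F).induce S).Connected ∧
        (m - n) ^ 2 + (3 * m - 3 * n) + (m - 2 * n) * (3 * n + 1) ≤
          (cutEdges (xcGadget n m (3 * n + 1) X F) S).ncard := by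
  classical
  have hm := m_bound n m X hX F hF hcov
  have hnn' : 1 ≤ n := hn
  have hnm : n + 8 ≤ m := by nlinarith
  have h2n : 2 * n + 1 ≤ m := by nlinarith
  -- the exact cover covers each x exactly once
  have hone : ∀ x : X, (F'.filter (fun i => x ∈ F i)).card = 1 := by
    intro x
    obtain ⟨i₀, ⟨hi₀F, hi₀x⟩, huniq⟩ := hcovF x
    rw [Finset.card_eq_one]
    refine ⟨i₀, ?_⟩
    ext j
    simp only [Finset.mem_filter, Finset.mem_singleton]
    constructor
    · rintro ⟨h1, h2⟩; exact huniq j ⟨h1, h2⟩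
    · rintro rfl; exact ⟨hi₀F, hi₀x⟩
  have hF'card : F'.card = n := by
    have h1 : ∑ x : X, (F'.filter (fun i => x ∈ F i)).card = 3 * n := by
      simp only [hone]
      simp [hX]
    rw [sum_card_filter_mem] at h1
    have h2 : ∑ i ∈ F', (F i).card = 3 * F'.card := by
      rw [Finset.sum_congr rfl (fun i hi => hF i (Finset.mem_range.mp (hsub hi)))]
      simp [mul_comm]
    omega
  set G := xcGadget n m (3 * n + 1) X F with hG
  set S : Set (XCVert n m (3 * n + 1) X) := (fun v => match v with
    | Sum.inl i => (i : ℕ) ∈ F' ∨ m ≤ (i : ℕ)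
    | Sum.inr (Sum.inl _) => True
    | Sum.inr (Sum.inr _) => False) with hS
  have memU : ∀ i : Fin (2 * (m - n)), (Sum.inl i ∈ S) ↔ ((i : ℕ) ∈ F' ∨ m ≤ (i : ℕ)) :=
    fun i => Iff.rfl
  have memX : ∀ x : X, (Sum.inr (Sum.inl x) : XCVert n m (3 * n + 1) X) ∈ S := fun x => trivial
  have memY : ∀ p : Fin (m - 2 * n) × Fin (3 * n + 1),
      (Sum.inr (Sum.inr p) : XCVert n m (3 * n + 1) X) ∉ S := fun p h => h
  -- a base point in the clique
  obtain ⟨i₀, hi₀⟩ : F'.Nonempty := Finset.card_pos.mp (by omega)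
  have hi₀m : i₀ < m := Finset.mem_range.mp (hsub hi₀)
  have hc₀lt : i₀ < 2 * (m - n) := by omega
  set c₀ : Fin (2 * (m - n)) := ⟨i₀, hc₀lt⟩ with hc₀def
  have hc₀ : Sum.inl c₀ ∈ S := Or.inl hi₀
  refine ⟨S, ⟨Sum.inl c₀, hc₀⟩, ?_, ?_⟩
  · -- connectivity
    rw [SimpleGraph.connected_iff]
    refine ⟨?_, ⟨⟨Sum.inl c₀, hc₀⟩⟩⟩
    have hub : ∀ (i : Fin (2 * (m - n))) (hi : Sum.inl i ∈ S),
        (G.induce S).Reachable ⟨Sum.inl i, hi⟩ ⟨Sum.inl c₀, hc₀⟩ := by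
      intro i hi
      by_cases h : i = c₀
      · subst h; rfl
      · exact SimpleGraph.Adj.reachable (by
          simp only [SimpleGraph.comap_adj, Function.Embedding.coe_subtype]
          exact adj_inl_inl.mpr h)
    have key : ∀ v : {v // v ∈ S}, (G.induce S).Reachable v ⟨Sum.inl c₀, hc₀⟩ := by
      rintro ⟨(i | x | p), hv⟩
      · exact hub i hv
      · obtain ⟨ix, ⟨hixF, hixx⟩, -⟩ := hcovF x
        have hixm : ix < m := Finset.mem_range.mp (hsub hixF)
        have hixlt : ix < 2 * (m - n) := by omega
        have hci : Sum.inl (⟨ix, hixlt⟩ : Fin (2 * (m - n))) ∈ S := Or.inl hixF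
        have step : (G.induce S).Adj ⟨Sum.inr (Sum.inl x), hv⟩ ⟨Sum.inl ⟨ix, hixlt⟩, hci⟩ := by
          simp only [SimpleGraph.comap_adj, Function.Embedding.coe_subtype]
          exact adj_x_inl.mpr ⟨hixm, hixx⟩
        exact step.reachable.trans (hub _ hci)
      · exact absurd hv (memY p)
    intro a b
    exact (key a).trans (key b).symm
  · -- the cut bound
    rw [ncard_cutEdges_eq_sum]
    simp only [Fintype.sum_sum_type]
    have hz : ∀ (a b : X ⊕ (Fin (m - 2 * n) × Fin (3 * n + 1))),
        (if (Sum.inr a : XCVert n m (3 * n + 1) X) ∈ S ∧ (Sum.inr b : XCVert n m (3 * n + 1) X) ∉ S ∧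
            G.Adj (Sum.inr a) (Sum.inr b) then 1 else 0) = 0 :=
      fun a b => if_neg (fun h => not_adj_inr_inr h.2.2)
    have hz2 : ∀ (p : Fin (m - 2 * n) × Fin (3 * n + 1)) (w : XCVert n m (3 * n + 1) X),
        (if (Sum.inr (Sum.inr p) : XCVert n m (3 * n + 1) X) ∈ S ∧ w ∉ S ∧
            G.Adj (Sum.inr (Sum.inr p)) w then 1 else 0) = 0 :=
      fun p w => if_neg (fun h => memY p h.1)
    simp only [hz, hz2, Finset.sum_const_zero, add_zero]
    simp only [Finset.sum_add_distrib]
    -- now three double sums remain; compute them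
    have hcardP : (Finset.univ.filter
        (fun i : Fin (2 * (m - n)) => (i : ℕ) ∈ F' ∨ m ≤ (i : ℕ))).card = m - n := by
      rw [card_filter_fin (2 * (m - n)) (fun t => t ∈ F' ∨ m ≤ t), Finset.filter_or]
      have e1 : (Finset.range (2 * (m - n))).filter (fun t => t ∈ F') = F' := by
        ext t
        simp only [Finset.mem_filter, Finset.mem_range]
        refine ⟨fun h => h.2, fun h => ⟨?_, h⟩⟩
        have := Finset.mem_range.mp (hsub h); omega
      have e2 : (Finset.range (2 * (m - n))).filter (fun t => m ≤ t) =
          Finset.Ico m (2 * (m - n)) := by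
        ext t
        simp only [Finset.mem_filter, Finset.mem_range, Finset.mem_Ico]
        omega
      rw [e1, e2, Finset.card_union_of_disjoint, hF'card, Nat.card_Ico]
      · omega
      · rw [Finset.disjoint_left]
        intro t ht ht2
        have := Finset.mem_range.mp (hsub ht)
        have := (Finset.mem_Ico.mp ht2).1
        omega
    have c1 : (∑ i : Fin (2 * (m - n)), if Sum.inl i ∈ S then (1 : ℕ) else 0) = m - n := by
      have hcg : ∀ i : Fin (2 * (m - n)), (if Sum.inl i ∈ S then (1 : ℕ) else 0) =
          (if (i : ℕ) ∈ F' ∨ m ≤ (i : ℕ) then 1 else 0) := fun i => if_congr (memU i) rfl rfl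
      simp only [hcg]
      rw [← Finset.card_filter, hcardP]
    have c2 : (∑ j : Fin (2 * (m - n)),
        if (Sum.inl j : XCVert n m (3 * n + 1) X) ∉ S then (1 : ℕ) else 0) = m - n := by
      have hcg : ∀ j : Fin (2 * (m - n)),
          (if (Sum.inl j : XCVert n m (3 * n + 1) X) ∉ S then (1 : ℕ) else 0) =
          (if ¬((j : ℕ) ∈ F' ∨ m ≤ (j : ℕ)) then 1 else 0) :=
        fun j => if_congr (not_congr (memU j)) rfl rfl
      simp only [hcg]
      rw [← Finset.card_filter]
      have := Finset.card_filter_add_card_filter_not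
        (s := (Finset.univ : Finset (Fin (2 * (m - n)))))
        (p := fun i => (i : ℕ) ∈ F' ∨ m ≤ (i : ℕ))
      rw [Finset.card_univ, Fintype.card_fin] at this
      omega
    have hUU : (∑ i : Fin (2 * (m - n)), ∑ j : Fin (2 * (m - n)),
        if Sum.inl i ∈ S ∧ Sum.inl j ∉ S ∧ G.Adj (Sum.inl i) (Sum.inl j) then 1 else 0) =
        (m - n) * (m - n) := by
      have hP : ∀ i j : Fin (2 * (m - n)),
          (if Sum.inl i ∈ S ∧ Sum.inl j ∉ S ∧ G.Adj (Sum.inl i) (Sum.inl j) then 1 else 0) =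
          (if Sum.inl i ∈ S then (1 : ℕ) else 0) *
            (if (Sum.inl j : XCVert n m (3 * n + 1) X) ∉ S then 1 else 0) := by
        intro i j
        by_cases h1 : Sum.inl i ∈ S
        · by_cases h2 : (Sum.inl j : XCVert n m (3 * n + 1) X) ∈ S
          · simp [h1, h2]
          · have hne : i ≠ j := fun h => h2 (h ▸ h1)
            have hadj : G.Adj (Sum.inl i) (Sum.inl j) := adj_inl_inl.mpr hne
            simp [h1, h2, hadj]
        · simp [h1]
      simp only [hP]
      rw [← Finset.sum_mul_sum, c1, c2]
    have hUY : (∑ i : Fin (2 * (m - n)), ∑ p : Fin (m - 2 * n) × Fin (3 * n + 1),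
        if Sum.inl i ∈ S ∧ Sum.inr (Sum.inr p) ∉ S ∧ G.Adj (Sum.inl i) (Sum.inr (Sum.inr p))
          then 1 else 0) = (m - 2 * n) * (3 * n + 1) := by
      rw [Finset.sum_comm]
      have hinner : ∀ p : Fin (m - 2 * n) × Fin (3 * n + 1),
          (∑ i : Fin (2 * (m - n)),
            if Sum.inl i ∈ S ∧ Sum.inr (Sum.inr p) ∉ S ∧ G.Adj (Sum.inl i) (Sum.inr (Sum.inr p))
              then 1 else 0) = 1 := by
        intro p
        have hplt : (p.1 : ℕ) < m - 2 * n := p.1.2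
        have hlt : m + (p.1 : ℕ) < 2 * (m - n) := by omega
        have hcg : ∀ i : Fin (2 * (m - n)),
            (if Sum.inl i ∈ S ∧ Sum.inr (Sum.inr p) ∉ S ∧ G.Adj (Sum.inl i) (Sum.inr (Sum.inr p))
              then (1 : ℕ) else 0) =
            (if i = (⟨m + (p.1 : ℕ), hlt⟩ : Fin (2 * (m - n))) then 1 else 0) := by
          intro i
          by_cases h : i = (⟨m + (p.1 : ℕ), hlt⟩ : Fin (2 * (m - n)))
          · subst h
            rw [if_pos rfl, if_pos]
            exact ⟨Or.inr (Nat.le_add_right m _), memY p, adj_inl_y.mpr rfl⟩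
          · rw [if_neg h, if_neg]
            rintro ⟨-, -, hadj⟩
            exact h (Fin.ext (adj_inl_y.mp hadj))
        simp only [hcg]
        simp
      simp only [hinner]
      simp [Finset.card_univ, mul_comm]
    have hxinner : ∀ x : X, (∑ i : Fin (2 * (m - n)),
        if Sum.inr (Sum.inl x) ∈ S ∧ Sum.inl i ∉ S ∧ G.Adj (Sum.inr (Sum.inl x)) (Sum.inl i)
          then 1 else 0) + 1 = ((Finset.range m).filter (fun t => x ∈ F t)).card := by
      intro x
      have hcg : ∀ i : Fin (2 * (m - n)),
          (if Sum.inr (Sum.inl x) ∈ S ∧ Sum.inl i ∉ S ∧ G.Adj (Sum.inr (Sum.inl x)) (Sum.inl i)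
            then (1 : ℕ) else 0) =
          (if ((i : ℕ) < m ∧ x ∈ F (i : ℕ)) ∧ (i : ℕ) ∉ F' then 1 else 0) := by
        intro i
        refine if_congr ?_ rfl rfl
        constructor
        · rintro ⟨-, h2, h3⟩
          obtain ⟨hm', hmem⟩ := adj_x_inl.mp h3
          exact ⟨⟨hm', hmem⟩, fun hf => h2 ((memU i).mpr (Or.inl hf))⟩
        · rintro ⟨⟨h1, h2⟩, h3⟩
          refine ⟨memX x, ?_, adj_x_inl.mpr ⟨h1, h2⟩⟩
          intro hS'
          rcases (memU i).mp hS' with h | h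
          · exact h3 h
          · omega
      simp only [hcg]
      rw [← Finset.card_filter,
        card_filter_fin (2 * (m - n)) (fun t => (t < m ∧ x ∈ F t) ∧ t ∉ F')]
      have e3 : (Finset.range (2 * (m - n))).filter (fun t => (t < m ∧ x ∈ F t) ∧ t ∉ F') =
          ((Finset.range m).filter (fun t => x ∈ F t)).filter (fun t => t ∉ F') := by
        ext t
        simp only [Finset.mem_filter, Finset.mem_range]
        constructor
        · rintro ⟨-, ⟨h1, h2⟩, h3⟩; exact ⟨⟨h1, h2⟩, h3⟩
        · rintro ⟨⟨h1, h2⟩, h3⟩; exact ⟨by omega, ⟨h1, h2⟩, h3⟩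
      rw [e3]
      have e4 : (((Finset.range m).filter (fun t => x ∈ F t)).filter (fun t => t ∈ F')).card = 1 := by
        have e4' : ((Finset.range m).filter (fun t => x ∈ F t)).filter (fun t => t ∈ F') =
            F'.filter (fun t => x ∈ F t) := by
          ext t
          simp only [Finset.mem_filter, Finset.mem_range]
          constructor
          · rintro ⟨⟨-, h2⟩, h3⟩; exact ⟨h3, h2⟩
          · rintro ⟨h1, h2⟩; exact ⟨⟨Finset.mem_range.mp (hsub h1), h2⟩, h1⟩
        rw [e4', hone x]
      have e5 := Finset.card_filter_add_card_filter_not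
        (s := (Finset.range m).filter (fun t => x ∈ F t)) (p := fun t => t ∈ F')
      omega
    have h3m : ∑ x : X, ((Finset.range m).filter (fun t => x ∈ F t)).card = 3 * m := by
      rw [sum_card_filter_mem]
      rw [Finset.sum_congr rfl (fun i hi => hF i (Finset.mem_range.mp hi))]
      simp [mul_comm]
    have hXU : (∑ x : X, ∑ i : Fin (2 * (m - n)),
        if Sum.inr (Sum.inl x) ∈ S ∧ Sum.inl i ∉ S ∧ G.Adj (Sum.inr (Sum.inl x)) (Sum.inl i)
          then 1 else 0) + 3 * n = 3 * m := by
      calc (∑ x : X, ∑ i : Fin (2 * (m - n)),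
            if Sum.inr (Sum.inl x) ∈ S ∧ Sum.inl i ∉ S ∧ G.Adj (Sum.inr (Sum.inl x)) (Sum.inl i)
              then 1 else 0) + 3 * n
          = (∑ x : X, ∑ i : Fin (2 * (m - n)),
            if Sum.inr (Sum.inl x) ∈ S ∧ Sum.inl i ∉ S ∧ G.Adj (Sum.inr (Sum.inl x)) (Sum.inl i)
              then 1 else 0) + ∑ _x : X, 1 := by
            rw [Finset.sum_const, Finset.card_univ, hX, smul_eq_mul, mul_one]
        _ = ∑ x : X, ((∑ i : Fin (2 * (m - n)),
            if Sum.inr (Sum.inl x) ∈ S ∧ Sum.inl i ∉ S ∧ G.Adj (Sum.inr (Sum.inl x)) (Sum.inl i)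
              then 1 else 0) + 1) := by rw [Finset.sum_add_distrib]
        _ = ∑ x : X, ((Finset.range m).filter (fun t => x ∈ F t)).card :=
            Finset.sum_congr rfl (fun x _ => hxinner x)
        _ = 3 * m := h3m
    rw [hUU, hUY]
    have hpow : (m - n) ^ 2 = (m - n) * (m - n) := sq (m - n) ▸ by ring
    omega

set_option maxHeartbeats 1000000 in
lemma xc_backward (n m : ℕ) (hn : 1 ≤ n)
    (X : Type*) [Fintype X] [DecidableEq X] (hX : Fintype.card X = 3 * n)
    (F : ℕ → Finset X) (hF : ∀ i < m, (F i).card = 3)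
    (hcov : ∀ x : X, 3 * (n + 2) ≤ ((Finset.range m).filter (fun i => x ∈ F i)).card)
    (S : Set (XCVert n m (3 * n + 1) X)) (hSne : S.Nonempty)
    (hconn : ((xcGadget n m (3 * n + 1) X F).induce S).Connected)
    (hC : (m - n) ^ 2 + (3 * m - 3 * n) + (m - 2 * n) * (3 * n + 1) ≤
          (cutEdges (xcGadget n m (3 * n + 1) X F) S).ncard) :
    ∃ F' : Finset ℕ, F' ⊆ Finset.range m ∧ ∀ x : X, ∃! i, i ∈ F' ∧ x ∈ F i := by
  classical
  have hm := m_bound n m X hX F hF hcov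
  have hm' : 3 * (n * n) + 6 * n ≤ m := by
    have hp2 : n ^ 2 = n * n := by ring
    omega
  set G := xcGadget n m (3 * n + 1) X F with hG
  rw [ncard_cutEdges_eq_sum] at hC
  simp only [Fintype.sum_sum_type] at hC
  have hz : ∀ (a b : X ⊕ (Fin (m - 2 * n) × Fin (3 * n + 1))),
      (if (Sum.inr a : XCVert n m (3 * n + 1) X) ∈ S ∧ (Sum.inr b : XCVert n m (3 * n + 1) X) ∉ S ∧
          G.Adj (Sum.inr a) (Sum.inr b) then 1 else 0) = 0 :=
    fun a b => if_neg (fun h => not_adj_inr_inr h.2.2)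
  simp only [hz, Finset.sum_const_zero, add_zero] at hC
  simp only [Finset.sum_add_distrib] at hC
  -- basic sets and counts
  set A : Finset (Fin (2 * (m - n))) := Finset.univ.filter (fun i => Sum.inl i ∈ S) with hAdef
  set A1 : Finset (Fin (2 * (m - n))) :=
    Finset.univ.filter (fun i => Sum.inl i ∈ S ∧ (i : ℕ) < m) with hA1def
  set A2 : Finset (Fin (2 * (m - n))) :=
    Finset.univ.filter (fun i => Sum.inl i ∈ S ∧ m ≤ (i : ℕ)) with hA2def
  set XS : Finset X := Finset.univ.filter (fun x => Sum.inr (Sum.inl x) ∈ S) with hXSdef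
  set XO : Finset X := Finset.univ.filter (fun x => ¬ (Sum.inr (Sum.inl x) ∈ S)) with hXOdef
  set tF : X → ℕ := fun x => (Finset.univ.filter
    (fun i : Fin (2 * (m - n)) => (Sum.inl i ∈ S ∧ (i : ℕ) < m) ∧ x ∈ F (i : ℕ))).card with htFdef
  set dF : X → ℕ := fun x => (Finset.univ.filter
    (fun i : Fin (2 * (m - n)) => (i : ℕ) < m ∧ x ∈ F (i : ℕ))).card with hdFdef
  have hmj : ∀ j : Fin (m - 2 * n), m + (j : ℕ) < 2 * (m - n) := fun j => by
    have := j.2; omega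
  set mj : Fin (m - 2 * n) → Fin (2 * (m - n)) := fun j => ⟨m + (j : ℕ), hmj j⟩ with hmjdef
  set wY : Fin (m - 2 * n) → ℕ := fun j => (Finset.univ.filter
    (fun l : Fin (3 * n + 1) => Sum.inr (Sum.inr (j, l)) ∈ S)).card with hwYdef
  -- block evaluations
  have hB1 : (∑ i : Fin (2 * (m - n)), ∑ j : Fin (2 * (m - n)),
      if Sum.inl i ∈ S ∧ Sum.inl j ∉ S ∧ G.Adj (Sum.inl i) (Sum.inl j) then 1 else 0) =
      A.card * (2 * (m - n) - A.card) := by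
    have hP : ∀ i j : Fin (2 * (m - n)),
        (if Sum.inl i ∈ S ∧ Sum.inl j ∉ S ∧ G.Adj (Sum.inl i) (Sum.inl j) then 1 else 0) =
        (if Sum.inl i ∈ S then (1 : ℕ) else 0) *
          (if (Sum.inl j : XCVert n m (3 * n + 1) X) ∉ S then 1 else 0) := by
      intro i j
      by_cases h1 : Sum.inl i ∈ S
      · by_cases h2 : (Sum.inl j : XCVert n m (3 * n + 1) X) ∈ S
        · simp [h1, h2]
        · have hne : i ≠ j := fun h => h2 (h ▸ h1)
          have hadj : G.Adj (Sum.inl i) (Sum.inl j) := adj_inl_inl.mpr hne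
          simp [h1, h2, hadj]
      · simp [h1]
    simp only [hP]
    rw [← Finset.sum_mul_sum]
    have c1 : (∑ i : Fin (2 * (m - n)), if Sum.inl i ∈ S then (1 : ℕ) else 0) = A.card :=
      (Finset.card_filter _ _).symm
    have hpart := Finset.card_filter_add_card_filter_not
      (s := (Finset.univ : Finset (Fin (2 * (m - n)))))
      (p := fun i => Sum.inl i ∈ S)
    rw [Finset.card_univ, Fintype.card_fin, ← hAdef] at hpart
    have c2 : (∑ j : Fin (2 * (m - n)),
        if (Sum.inl j : XCVert n m (3 * n + 1) X) ∉ S then (1 : ℕ) else 0) =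
        2 * (m - n) - A.card := by
      rw [← Finset.card_filter]
      omega
    rw [c1, c2]
  have hB2 : (∑ i : Fin (2 * (m - n)), ∑ x : X,
      if Sum.inl i ∈ S ∧ Sum.inr (Sum.inl x) ∉ S ∧ G.Adj (Sum.inl i) (Sum.inr (Sum.inl x))
        then 1 else 0) = ∑ x ∈ XO, tF x := by
    rw [Finset.sum_comm]
    have hx : ∀ x : X, (∑ i : Fin (2 * (m - n)),
        if Sum.inl i ∈ S ∧ Sum.inr (Sum.inl x) ∉ S ∧ G.Adj (Sum.inl i) (Sum.inr (Sum.inl x))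
          then 1 else 0) =
        if ¬ (Sum.inr (Sum.inl x) : XCVert n m (3 * n + 1) X) ∈ S then tF x else 0 := by
      intro x
      by_cases hxS : (Sum.inr (Sum.inl x) : XCVert n m (3 * n + 1) X) ∈ S
      · rw [if_neg (fun h => h hxS)]
        exact Finset.sum_eq_zero fun i _ => if_neg (fun h => h.2.1 hxS)
      · rw [if_pos hxS]
        have hcg : ∀ i : Fin (2 * (m - n)),
            (if Sum.inl i ∈ S ∧ Sum.inr (Sum.inl x) ∉ S ∧ G.Adj (Sum.inl i) (Sum.inr (Sum.inl x))
              then (1 : ℕ) else 0) =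
            (if (Sum.inl i ∈ S ∧ (i : ℕ) < m) ∧ x ∈ F (i : ℕ) then 1 else 0) := by
          intro i
          refine if_congr ?_ rfl rfl
          constructor
          · rintro ⟨h1, -, h3⟩
            obtain ⟨hlt, hmem⟩ := adj_inl_x.mp h3
            exact ⟨⟨h1, hlt⟩, hmem⟩
          · rintro ⟨⟨h1, h2⟩, h3⟩
            exact ⟨h1, hxS, adj_inl_x.mpr ⟨h2, h3⟩⟩
        simp only [hcg]
        exact (Finset.card_filter _ _).symm
    simp only [hx]
    rw [← Finset.sum_filter, ← hXOdef]
  have hB3 : (∑ i : Fin (2 * (m - n)), ∑ p : Fin (m - 2 * n) × Fin (3 * n + 1),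
      if Sum.inl i ∈ S ∧ Sum.inr (Sum.inr p) ∉ S ∧ G.Adj (Sum.inl i) (Sum.inr (Sum.inr p))
        then 1 else 0) =
      ∑ j : Fin (m - 2 * n), if Sum.inl (mj j) ∈ S then (3 * n + 1) - wY j else 0 := by
    rw [Finset.sum_comm, Fintype.sum_prod_type]
    refine Finset.sum_congr rfl fun j _ => ?_
    have hin : ∀ l : Fin (3 * n + 1), (∑ i : Fin (2 * (m - n)),
        if Sum.inl i ∈ S ∧ Sum.inr (Sum.inr (j, l)) ∉ S ∧
          G.Adj (Sum.inl i) (Sum.inr (Sum.inr (j, l))) then 1 else 0) =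
        if Sum.inl (mj j) ∈ S ∧
            ¬ (Sum.inr (Sum.inr (j, l)) : XCVert n m (3 * n + 1) X) ∈ S then 1 else 0 := by
      intro l
      have hcg : ∀ i : Fin (2 * (m - n)),
          (if Sum.inl i ∈ S ∧ Sum.inr (Sum.inr (j, l)) ∉ S ∧
            G.Adj (Sum.inl i) (Sum.inr (Sum.inr (j, l))) then (1 : ℕ) else 0) =
          (if i = mj j then (if Sum.inl (mj j) ∈ S ∧
            ¬ (Sum.inr (Sum.inr (j, l)) : XCVert n m (3 * n + 1) X) ∈ S then 1 else 0) else 0) := by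
        intro i
        by_cases h : i = mj j
        · subst h
          rw [if_pos rfl]
          refine if_congr ?_ rfl rfl
          constructor
          · rintro ⟨h1, h2, -⟩; exact ⟨h1, h2⟩
          · rintro ⟨h1, h2⟩; exact ⟨h1, h2, adj_inl_y.mpr rfl⟩
        · rw [if_neg h, if_neg]
          rintro ⟨-, -, hadj⟩
          exact h (Fin.ext (adj_inl_y.mp hadj))
      simp only [hcg]
      simp
    simp only [hin]
    by_cases hu : Sum.inl (mj j) ∈ S
    · rw [if_pos hu]
      simp only [hu, true_and]
      rw [← Finset.card_filter]
      have hpart := Finset.card_filter_add_card_filter_not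
        (s := (Finset.univ : Finset (Fin (3 * n + 1))))
        (p := fun l => Sum.inr (Sum.inr (j, l)) ∈ S)
      rw [Finset.card_univ, Fintype.card_fin] at hpart
      have hw : (Finset.filter (fun l => Sum.inr (Sum.inr (j, l)) ∈ S) Finset.univ).card = wY j :=
        rfl
      omega
    · rw [if_neg hu]
      exact Finset.sum_eq_zero fun l _ => if_neg (fun h => hu h.1)
  have hB5 : (∑ p : Fin (m - 2 * n) × Fin (3 * n + 1), ∑ i : Fin (2 * (m - n)),
      if Sum.inr (Sum.inr p) ∈ S ∧ Sum.inl i ∉ S ∧ G.Adj (Sum.inr (Sum.inr p)) (Sum.inl i)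
        then 1 else 0) =
      ∑ j : Fin (m - 2 * n), if Sum.inl (mj j) ∈ S then 0 else wY j := by
    rw [Fintype.sum_prod_type]
    refine Finset.sum_congr rfl fun j _ => ?_
    have hin : ∀ l : Fin (3 * n + 1), (∑ i : Fin (2 * (m - n)),
        if Sum.inr (Sum.inr (j, l)) ∈ S ∧ Sum.inl i ∉ S ∧
          G.Adj (Sum.inr (Sum.inr (j, l))) (Sum.inl i) then 1 else 0) =
        if (Sum.inr (Sum.inr (j, l)) : XCVert n m (3 * n + 1) X) ∈ S ∧
            ¬ Sum.inl (mj j) ∈ S then 1 else 0 := by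
      intro l
      have hcg : ∀ i : Fin (2 * (m - n)),
          (if Sum.inr (Sum.inr (j, l)) ∈ S ∧ Sum.inl i ∉ S ∧
            G.Adj (Sum.inr (Sum.inr (j, l))) (Sum.inl i) then (1 : ℕ) else 0) =
          (if i = mj j then (if (Sum.inr (Sum.inr (j, l)) : XCVert n m (3 * n + 1) X) ∈ S ∧
            ¬ Sum.inl (mj j) ∈ S then 1 else 0) else 0) := by
        intro i
        by_cases h : i = mj j
        · subst h
          rw [if_pos rfl]
          refine if_congr ?_ rfl rfl
          constructor
          · rintro ⟨h1, h2, -⟩; exact ⟨h1, h2⟩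
          · rintro ⟨h1, h2⟩; exact ⟨h1, h2, adj_y_inl.mpr rfl⟩
        · rw [if_neg h, if_neg]
          rintro ⟨-, -, hadj⟩
          exact h (Fin.ext (adj_y_inl.mp hadj))
      simp only [hcg]
      simp
    simp only [hin]
    by_cases hu : Sum.inl (mj j) ∈ S
    · rw [if_pos hu]
      exact Finset.sum_eq_zero fun l _ => if_neg (fun h => h.2 hu)
    · rw [if_neg hu]
      simp only [hu, not_false_iff, and_true]
      exact (Finset.card_filter _ _).symm
  -- the X -> U block: sum over univ equals sum over XS, and per-x value
  have hz4 : ∀ x : X, ¬ (Sum.inr (Sum.inl x) : XCVert n m (3 * n + 1) X) ∈ S →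
      (∑ i : Fin (2 * (m - n)),
        if Sum.inr (Sum.inl x) ∈ S ∧ Sum.inl i ∉ S ∧ G.Adj (Sum.inr (Sum.inl x)) (Sum.inl i)
          then 1 else 0) = 0 :=
    fun x hx => Finset.sum_eq_zero fun i _ => if_neg (fun h => hx h.1)
  have hB4 : (∑ x : X, ∑ i : Fin (2 * (m - n)),
      if Sum.inr (Sum.inl x) ∈ S ∧ Sum.inl i ∉ S ∧ G.Adj (Sum.inr (Sum.inl x)) (Sum.inl i)
        then 1 else 0) + ∑ x ∈ XS, tF x = ∑ x ∈ XS, dF x := by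
    have hsplit4 := Finset.sum_filter_add_sum_filter_not Finset.univ
      (fun x => Sum.inr (Sum.inl x) ∈ S)
      (fun x => ∑ i : Fin (2 * (m - n)),
        if Sum.inr (Sum.inl x) ∈ S ∧ Sum.inl i ∉ S ∧ G.Adj (Sum.inr (Sum.inl x)) (Sum.inl i)
          then 1 else 0)
    rw [← hXSdef, ← hXOdef] at hsplit4
    have hz4' : (∑ x ∈ XO, ∑ i : Fin (2 * (m - n)),
        if Sum.inr (Sum.inl x) ∈ S ∧ Sum.inl i ∉ S ∧ G.Adj (Sum.inr (Sum.inl x)) (Sum.inl i)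
          then 1 else 0) = 0 :=
      Finset.sum_eq_zero fun x hx => hz4 x (Finset.mem_filter.mp hx).2
    rw [← hsplit4, hz4', add_zero, ← Finset.sum_add_distrib]
    refine Finset.sum_congr rfl fun x hx => ?_
    have hxS : (Sum.inr (Sum.inl x) : XCVert n m (3 * n + 1) X) ∈ S :=
      (Finset.mem_filter.mp hx).2
    have hcg : ∀ i : Fin (2 * (m - n)),
        (if Sum.inr (Sum.inl x) ∈ S ∧ Sum.inl i ∉ S ∧ G.Adj (Sum.inr (Sum.inl x)) (Sum.inl i)
          then (1 : ℕ) else 0) =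
        (if ¬ Sum.inl i ∈ S ∧ ((i : ℕ) < m ∧ x ∈ F (i : ℕ)) then 1 else 0) := by
      intro i
      refine if_congr ?_ rfl rfl
      constructor
      · rintro ⟨-, h2, h3⟩; exact ⟨h2, adj_x_inl.mp h3⟩
      · rintro ⟨h2, h3⟩; exact ⟨hxS, h2, adj_x_inl.mpr h3⟩
    simp only [hcg]
    rw [← Finset.card_filter]
    have hpart := Finset.card_filter_add_card_filter_not
      (s := Finset.univ.filter (fun i : Fin (2 * (m - n)) => (i : ℕ) < m ∧ x ∈ F (i : ℕ)))
      (p := fun i => Sum.inl i ∈ S)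
    rw [Finset.filter_filter, Finset.filter_filter] at hpart
    have e1 : (Finset.univ.filter
        (fun i : Fin (2 * (m - n)) => ((i : ℕ) < m ∧ x ∈ F (i : ℕ)) ∧ Sum.inl i ∈ S)) =
        (Finset.univ.filter
        (fun i : Fin (2 * (m - n)) => (Sum.inl i ∈ S ∧ (i : ℕ) < m) ∧ x ∈ F (i : ℕ))) := by
      ext i
      simp only [Finset.mem_filter, Finset.mem_univ, true_and]
      tauto
    have e2 : (Finset.univ.filter
        (fun i : Fin (2 * (m - n)) => ((i : ℕ) < m ∧ x ∈ F (i : ℕ)) ∧ ¬ Sum.inl i ∈ S)) =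
        (Finset.univ.filter
        (fun i : Fin (2 * (m - n)) => ¬ Sum.inl i ∈ S ∧ ((i : ℕ) < m ∧ x ∈ F (i : ℕ)))) := by
      ext i
      simp only [Finset.mem_filter, Finset.mem_univ, true_and]
      tauto
    rw [e1, e2] at hpart
    have htFx : (Finset.univ.filter
        (fun i : Fin (2 * (m - n)) => (Sum.inl i ∈ S ∧ (i : ℕ) < m) ∧ x ∈ F (i : ℕ))).card =
        tF x := rfl
    have hdFx : (Finset.univ.filter
        (fun i : Fin (2 * (m - n)) => (i : ℕ) < m ∧ x ∈ F (i : ℕ))).card = dF x := rfl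
    omega
  rw [hB1, hB2, hB3, hB5] at hC
  have htA : ∀ x : X, tF x ≤ A.card := by
    intro x
    refine Finset.card_le_card ?_
    intro i hi
    simp only [hA1def, htFdef, Finset.mem_filter, Finset.mem_univ, true_and] at hi ⊢
    rw [hAdef]
    simp only [Finset.mem_filter, Finset.mem_univ, true_and]
    exact hi.1.1
  have hdF2k : ∀ x : X, dF x ≤ 2 * (m - n) := by
    intro x
    have := Finset.card_filter_le (Finset.univ : Finset (Fin (2 * (m - n))))
      (fun i : Fin (2 * (m - n)) => (i : ℕ) < m ∧ x ∈ F (i : ℕ))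
    rwa [Finset.card_univ, Fintype.card_fin] at this
  have hsumwY : ∑ j : Fin (m - 2 * n), wY j =
      (Finset.univ.filter (fun p : Fin (m - 2 * n) × Fin (3 * n + 1) =>
        Sum.inr (Sum.inr p) ∈ S)).card := by
    rw [Finset.card_filter, Fintype.sum_prod_type]
    exact Finset.sum_congr rfl fun j _ => Finset.card_filter _ _
  have hsing : ∀ w0 : X ⊕ (Fin (m - 2 * n) × Fin (3 * n + 1)), S ≠ {Sum.inr w0} := by
    intro w0 hSeq
    have hA0 : A.card = 0 := by
      rw [Finset.card_eq_zero]
      ext i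
      simp only [hAdef, Finset.mem_filter, Finset.mem_univ, true_and, Finset.notMem_empty,
        iff_false, hSeq, Set.mem_singleton_iff]
      exact fun h => Sum.inl_ne_inr h
    have hXS1 : XS.card ≤ 1 := by
      refine Finset.card_le_one.mpr ?_
      intro a ha b hb
      simp only [hXSdef, Finset.mem_filter, Finset.mem_univ, true_and, hSeq,
        Set.mem_singleton_iff] at ha hb
      exact Sum.inl_injective (Sum.inr_injective (ha.trans hb.symm))
    have hB2z : ∑ x ∈ XO, tF x = 0 :=
      Finset.sum_eq_zero fun x _ => by have := htA x; omega
    have hB3z : (∑ j : Fin (m - 2 * n),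
        if Sum.inl (mj j) ∈ S then (3 * n + 1) - wY j else 0) = 0 :=
      Finset.sum_eq_zero fun j _ => if_neg (by
        rw [hSeq, Set.mem_singleton_iff]
        exact fun h => Sum.inl_ne_inr h)
    have hB5le : (∑ j : Fin (m - 2 * n), if Sum.inl (mj j) ∈ S then 0 else wY j) ≤ 1 := by
      calc (∑ j : Fin (m - 2 * n), if Sum.inl (mj j) ∈ S then 0 else wY j)
          ≤ ∑ j : Fin (m - 2 * n), wY j := by
            refine Finset.sum_le_sum fun j _ => ?_
            split <;> omega
        _ ≤ 1 := by
            rw [hsumwY]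
            refine Finset.card_le_one.mpr ?_
            intro a ha b hb
            simp only [Finset.mem_filter, Finset.mem_univ, true_and, hSeq,
              Set.mem_singleton_iff] at ha hb
            exact Sum.inr_injective (Sum.inr_injective (ha.trans hb.symm))
    have hB4le : (∑ x : X, ∑ i : Fin (2 * (m - n)),
        if Sum.inr (Sum.inl x) ∈ S ∧ Sum.inl i ∉ S ∧ G.Adj (Sum.inr (Sum.inl x)) (Sum.inl i)
          then 1 else 0) ≤ 2 * (m - n) := by
      have h1 : ∑ x ∈ XS, dF x ≤ 2 * (m - n) := by
        calc ∑ x ∈ XS, dF x ≤ ∑ _x ∈ XS, 2 * (m - n) :=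
              Finset.sum_le_sum fun x _ => hdF2k x
          _ = XS.card * (2 * (m - n)) := by rw [Finset.sum_const, smul_eq_mul]
          _ ≤ 1 * (2 * (m - n)) := Nat.mul_le_mul_right _ hXS1
          _ = 2 * (m - n) := one_mul _
      omega
    have h0 : 1 * 1 ≤ n * n := Nat.mul_le_mul hn hn
    have h8 : 8 ≤ m - n := by omega
    have hKK : 2 * (m - n) + 1 < (m - n) ^ 2 := two_lt_sq _ h8
    rw [hA0] at hC
    simp only [Nat.zero_mul] at hC
    omega
  have htpos : ∀ x : X, Sum.inr (Sum.inl x) ∈ S → 1 ≤ tF x := by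
    intro x hxS
    by_contra hcon
    have ht0 : tF x = 0 := by omega
    have hno : ∀ w ∈ S, ¬ G.Adj (Sum.inr (Sum.inl x)) w := by
      rintro (i | x' | p) hw hadj
      · obtain ⟨hlt, hmem⟩ := adj_x_inl.mp hadj
        have hmemf : i ∈ Finset.univ.filter
            (fun i : Fin (2 * (m - n)) => (Sum.inl i ∈ S ∧ (i : ℕ) < m) ∧ x ∈ F (i : ℕ)) :=
          Finset.mem_filter.mpr ⟨Finset.mem_univ _, ⟨hw, hlt⟩, hmem⟩
        have hpos := Finset.card_pos.mpr ⟨i, hmemf⟩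
        have : (Finset.univ.filter
            (fun i : Fin (2 * (m - n)) => (Sum.inl i ∈ S ∧ (i : ℕ) < m) ∧ x ∈ F (i : ℕ))).card
            = tF x := rfl
        omega
      · exact not_adj_inr_inr hadj
      · exact not_adj_inr_inr hadj
    exact hsing (Sum.inl x) (eq_singleton_of_no_adj hconn hxS hno)
  have hwzero : ∀ j : Fin (m - 2 * n), Sum.inl (mj j) ∉ S → wY j = 0 := by
    intro j hu
    by_contra hcon
    have hpos : 0 < (Finset.univ.filter
        (fun l : Fin (3 * n + 1) => Sum.inr (Sum.inr (j, l)) ∈ S)).card :=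
      Nat.pos_of_ne_zero hcon
    obtain ⟨l, hl⟩ := Finset.card_pos.mp hpos
    have hyS : (Sum.inr (Sum.inr (j, l)) : XCVert n m (3 * n + 1) X) ∈ S :=
      (Finset.mem_filter.mp hl).2
    have hno : ∀ w ∈ S, ¬ G.Adj (Sum.inr (Sum.inr (j, l))) w := by
      rintro (i | x' | p) hw hadj
      · have : i = mj j := Fin.ext (adj_y_inl.mp hadj)
        exact hu (this ▸ hw)
      · exact not_adj_inr_inr hadj
      · exact not_adj_inr_inr hadj
    exact hsing (Sum.inr (j, l)) (eq_singleton_of_no_adj hconn hyS hno)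
  -- counting facts
  set AJ : Finset (Fin (m - 2 * n)) :=
    Finset.univ.filter (fun j => Sum.inl (mj j) ∈ S) with hAJdef
  have ha12 : A1.card + A2.card = A.card := by
    have hpart := Finset.card_filter_add_card_filter_not
      (s := A) (p := fun i : Fin (2 * (m - n)) => (i : ℕ) < m)
    rw [hAdef, Finset.filter_filter, Finset.filter_filter] at hpart
    simp only [Nat.not_lt] at hpart
    rw [← hA1def, ← hA2def, ← hAdef] at hpart
    exact hpart
  have ha2aj : A2.card = AJ.card := by
    refine Finset.card_bij' (fun i hi => (⟨(i : ℕ) - m, by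
      have h2 := (Finset.mem_filter.mp hi).2.2
      have h3 := i.2
      omega⟩ : Fin (m - 2 * n)))
      (fun j hj => mj j) ?_ ?_ ?_ ?_
    · intro i hi
      have h2 := (Finset.mem_filter.mp hi).2
      have hmjeq : mj ⟨(i : ℕ) - m, by have := i.2; omega⟩ = i := by
        apply Fin.ext
        simp only [hmjdef]
        omega
      simp only [hAJdef, Finset.mem_filter, Finset.mem_univ, true_and]
      rw [hmjeq]
      exact h2.1
    · intro j hj
      simp only [hAJdef, Finset.mem_filter, Finset.mem_univ, true_and] at hj
      simp only [hA2def, Finset.mem_filter, Finset.mem_univ, true_and]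
      exact ⟨hj, by simp [hmjdef]⟩
    · intro i hi
      apply Fin.ext
      simp only [hmjdef]
      have h2 := (Finset.mem_filter.mp hi).2.2
      omega
    · intro j hj
      apply Fin.ext
      simp only [hmjdef]
      omega
  have hajq : AJ.card ≤ m - 2 * n := by
    have := Finset.card_filter_le (Finset.univ : Finset (Fin (m - 2 * n)))
      (fun j => Sum.inl (mj j) ∈ S)
    rwa [Finset.card_univ, Fintype.card_fin, ← hAJdef] at this
  have ha2k : A.card ≤ 2 * (m - n) := by
    have := Finset.card_filter_le (Finset.univ : Finset (Fin (2 * (m - n))))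
      (fun i => Sum.inl i ∈ S)
    rwa [Finset.card_univ, Fintype.card_fin, ← hAdef] at this
  have ht_le_a1 : ∀ x : X, tF x ≤ A1.card := by
    intro x
    refine Finset.card_le_card ?_
    intro i hi
    simp only [Finset.mem_filter, Finset.mem_univ, true_and] at hi
    rw [hA1def]
    simp only [Finset.mem_filter, Finset.mem_univ, true_and]
    exact hi.1
  have htledF : ∀ x : X, tF x ≤ dF x := by
    intro x
    refine Finset.card_le_card ?_
    intro i hi
    simp only [Finset.mem_filter, Finset.mem_univ, true_and] at hi ⊢
    exact ⟨hi.1.2, hi.2⟩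
  have hdFval : ∀ x : X, dF x = ((Finset.range m).filter (fun t => x ∈ F t)).card := by
    intro x
    have hrfl : dF x = (Finset.univ.filter
        (fun i : Fin (2 * (m - n)) => (i : ℕ) < m ∧ x ∈ F (i : ℕ))).card := rfl
    rw [hrfl, card_filter_fin (2 * (m - n)) (fun t => t < m ∧ x ∈ F t)]
    congr 1
    ext t
    simp only [Finset.mem_filter, Finset.mem_range]
    constructor
    · rintro ⟨-, h1, h2⟩; exact ⟨h1, h2⟩
    · rintro ⟨h1, h2⟩; exact ⟨by omega, h1, h2⟩
  have hdFbig : ∀ x : X, 3 * n + 6 ≤ dF x := by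
    intro x
    rw [hdFval]
    have := hcov x
    omega
  have hXpart : XS.card + XO.card = 3 * n := by
    have hpart := Finset.card_filter_add_card_filter_not
      (s := (Finset.univ : Finset X)) (p := fun x => Sum.inr (Sum.inl x) ∈ S)
    rw [Finset.card_univ, hX, ← hXSdef, ← hXOdef] at hpart
    exact hpart
  have hTSbound : XS.card ≤ ∑ x ∈ XS, tF x := by
    calc XS.card = ∑ _x ∈ XS, 1 := by rw [Finset.sum_const, smul_eq_mul, mul_one]
      _ ≤ ∑ x ∈ XS, tF x := Finset.sum_le_sum fun x hx =>
          htpos x (Finset.mem_filter.mp hx).2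
  have hDuniv : ∑ x : X, dF x = 3 * m := by
    calc ∑ x : X, dF x = ∑ x : X, ((Finset.range m).filter (fun t => x ∈ F t)).card :=
          Finset.sum_congr rfl fun x _ => hdFval x
      _ = ∑ i ∈ Finset.range m, (F i).card := sum_card_filter_mem F (Finset.range m)
      _ = 3 * m := by
          rw [Finset.sum_congr rfl (fun i hi => hF i (Finset.mem_range.mp hi))]
          simp [mul_comm]
  have hDsplit : (∑ x ∈ XS, dF x) + (∑ x ∈ XO, dF x) = 3 * m := by
    rw [Finset.sum_filter_add_sum_filter_not]
    exact hDuniv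
  have hTOR : (∑ x ∈ XO, tF x) + (∑ x ∈ XO, (dF x - tF x)) = ∑ x ∈ XO, dF x := by
    rw [← Finset.sum_add_distrib]
    exact Finset.sum_congr rfl fun x _ => by have := htledF x; omega
  have hB35 : (∑ j : Fin (m - 2 * n), if Sum.inl (mj j) ∈ S then (3 * n + 1) - wY j else 0) +
      (∑ j : Fin (m - 2 * n), if Sum.inl (mj j) ∈ S then 0 else wY j) ≤
      AJ.card * (3 * n + 1) := by
    rw [← Finset.sum_add_distrib]
    calc (∑ j : Fin (m - 2 * n),
          ((if Sum.inl (mj j) ∈ S then (3 * n + 1) - wY j else 0) +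
            (if Sum.inl (mj j) ∈ S then 0 else wY j)))
        ≤ ∑ j : Fin (m - 2 * n), (if Sum.inl (mj j) ∈ S then 3 * n + 1 else 0) := by
          refine Finset.sum_le_sum fun j _ => ?_
          by_cases hu : Sum.inl (mj j) ∈ S
          · simp only [hu, if_true]
            omega
          · simp only [hu, if_false]
            rw [hwzero j hu]
      _ = AJ.card * (3 * n + 1) := by
          rw [← Finset.sum_filter, Finset.sum_const, smul_eq_mul, ← hAJdef]
  -- nonlinear helper facts
  have hnm : n ≤ m := by
    have h0 : 0 ≤ n * n := Nat.zero_le _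
    omega
  have F1 : A.card * (2 * (m - n) - A.card) ≤ (m - n) ^ 2 := quad_le _ _ ha2k
  have F2 : AJ.card < m - 2 * n →
      AJ.card * (3 * n + 1) + (3 * n + 1) ≤ (m - 2 * n) * (3 * n + 1) := by
    intro h
    calc AJ.card * (3 * n + 1) + (3 * n + 1) = (AJ.card + 1) * (3 * n + 1) := by ring
      _ ≤ (m - 2 * n) * (3 * n + 1) := Nat.mul_le_mul_right _ h
  -- Claim 1: all pendant clique vertices lie in S
  have hAJfull : AJ.card = m - 2 * n := by
    by_contra hne
    have hlt : AJ.card < m - 2 * n := by omega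
    have hF2 := F2 hlt
    omega
  rw [hAJfull] at hB35
  -- Claim 2: X ⊆ S
  have haK : A.card ≤ (m - n) + 2 * n + 1 := by
    by_contra hbig
    have hbig' : (m - n) + 2 * n + 2 ≤ A.card := by omega
    have F3 : A.card * (2 * (m - n) - A.card) + (2 * n + 2) * (2 * n + 2) ≤ (m - n) ^ 2 :=
      quad_lt _ _ _ ha2k (by omega)
    have F4 : 3 * n < (2 * n + 2) * (2 * n + 2) := mul_big n
    omega
  have hR5 : 5 * XO.card ≤ ∑ x ∈ XO, (dF x - tF x) := by
    calc 5 * XO.card = ∑ _x ∈ XO, 5 := by rw [Finset.sum_const, smul_eq_mul, mul_comm]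
      _ ≤ ∑ x ∈ XO, (dF x - tF x) := by
          refine Finset.sum_le_sum fun x _ => ?_
          have h1 := ht_le_a1 x
          have h2 := hdFbig x
          omega
  have hXO0 : XO.card = 0 := by omega
  -- Claim 3: S contains exactly m - n clique vertices, n of which are set vertices
  have hacard : A.card = m - n := by
    by_contra hne
    have F5 : A.card * (2 * (m - n) - A.card) + 1 ≤ (m - n) ^ 2 := quad_ne _ _ ha2k hne
    omega
  have hA1n : A1.card = n := by omega
  have hXSuniv : XS = Finset.univ := by
    apply Finset.eq_univ_of_card
    rw [hX]
    omega
  -- sum of tF over all of X equals 3 * A1.card = 3n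
  have himg : ∀ x : X, tF x =
      ((A1.image (fun i : Fin (2 * (m - n)) => (i : ℕ))).filter (fun t => x ∈ F t)).card := by
    intro x
    have e : A1.filter (fun i : Fin (2 * (m - n)) => x ∈ F (i : ℕ)) = Finset.univ.filter
        (fun i : Fin (2 * (m - n)) => (Sum.inl i ∈ S ∧ (i : ℕ) < m) ∧ x ∈ F (i : ℕ)) := by
      rw [hA1def, Finset.filter_filter]
    calc tF x = (A1.filter (fun i : Fin (2 * (m - n)) => x ∈ F (i : ℕ))).card := by rw [e]
      _ = ((A1.filter (fun i : Fin (2 * (m - n)) => x ∈ F (i : ℕ))).image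
            (fun i : Fin (2 * (m - n)) => (i : ℕ))).card :=
          (Finset.card_image_of_injective _ Fin.val_injective).symm
      _ = ((A1.image (fun i : Fin (2 * (m - n)) => (i : ℕ))).filter (fun t => x ∈ F t)).card := by
          rw [Finset.filter_image]
  have hTsum : ∑ x : X, tF x = 3 * A1.card := by
    calc ∑ x : X, tF x
        = ∑ x : X, ((A1.image (fun i : Fin (2 * (m - n)) => (i : ℕ))).filter
            (fun t => x ∈ F t)).card := Finset.sum_congr rfl fun x _ => himg x
      _ = ∑ t ∈ A1.image (fun i : Fin (2 * (m - n)) => (i : ℕ)), (F t).card :=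
          sum_card_filter_mem F _
      _ = ∑ t ∈ A1.image (fun i : Fin (2 * (m - n)) => (i : ℕ)), 3 := by
          refine Finset.sum_congr rfl fun t ht => ?_
          obtain ⟨i, hi, rfl⟩ := Finset.mem_image.mp ht
          exact hF _ (Finset.mem_filter.mp hi).2.2
      _ = 3 * A1.card := by
          rw [Finset.sum_const, smul_eq_mul,
            Finset.card_image_of_injective _ Fin.val_injective, mul_comm]
  have hTS3n : ∑ x ∈ XS, tF x ≤ 3 * n := by omega
  have hTSuniv : ∑ x ∈ XS, tF x = ∑ x : X, tF x := by rw [hXSuniv]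
  have hxSall : ∀ x : X, Sum.inr (Sum.inl x) ∈ S := by
    intro x
    have : x ∈ XS := hXSuniv ▸ Finset.mem_univ x
    exact (Finset.mem_filter.mp this).2
  have htF1 : ∀ x : X, tF x = 1 := by
    by_contra hcon
    push_neg at hcon
    obtain ⟨x0, hx0⟩ := hcon
    have hlt : ∑ x : X, (1 : ℕ) < ∑ x : X, tF x := by
      refine Finset.sum_lt_sum (fun x _ => htpos x (hxSall x)) ⟨x0, Finset.mem_univ _, ?_⟩
      have := htpos x0 (hxSall x0)
      omega
    rw [Finset.sum_const, Finset.card_univ, hX, smul_eq_mul, mul_one] at hlt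
    omega
  -- construct the exact cover
  refine ⟨A1.image (fun i : Fin (2 * (m - n)) => (i : ℕ)), ?_, ?_⟩
  · intro t ht
    obtain ⟨i, hi, rfl⟩ := Finset.mem_image.mp ht
    exact Finset.mem_range.mpr (Finset.mem_filter.mp hi).2.2
  · intro x
    have h1 : ((A1.image (fun i : Fin (2 * (m - n)) => (i : ℕ))).filter
        (fun t => x ∈ F t)).card = 1 := by
      rw [← himg x, htF1 x]
    obtain ⟨i0, hi0⟩ := Finset.card_eq_one.mp h1
    have hmem0 : i0 ∈ (A1.image (fun i : Fin (2 * (m - n)) => (i : ℕ))).filter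
        (fun t => x ∈ F t) := hi0 ▸ Finset.mem_singleton_self i0
    obtain ⟨hm1, hm2⟩ := Finset.mem_filter.mp hmem0
    refine ⟨i0, ⟨hm1, hm2⟩, ?_⟩
    rintro j ⟨hj1, hj2⟩
    have : j ∈ (A1.image (fun i : Fin (2 * (m - n)) => (i : ℕ))).filter
        (fun t => x ∈ F t) := Finset.mem_filter.mpr ⟨hj1, hj2⟩
    rw [hi0] at this
    exact Finset.mem_singleton.mp this








theorem stmt5 (n m : ℕ) (hn : 1 ≤ n)
    (X : Type*) [Fintype X] [DecidableEq X] (hX : Fintype.card X = 3 * n)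
    (F : ℕ → Finset X) (hF : ∀ i < m, (F i).card = 3)
    (hcov : ∀ x : X, 3 * (n + 2) ≤ ((Finset.range m).filter (fun i => x ∈ F i)).card) :
    (∃ F' : Finset ℕ, F' ⊆ Finset.range m ∧ ∀ x : X, ∃! i, i ∈ F' ∧ x ∈ F i) ↔
      (∃ S : Set (XCVert n m (3 * n + 1) X), S.Nonempty ∧
        ((xcGadget n m (3 * n + 1) X F).induce S).Connected ∧
        (m - n) ^ 2 + (3 * m - 3 * n) + (m - 2 * n) * (3 * n + 1) ≤
          (cutEdges (xcGadget n m (3 * n + 1) X F) S).ncard) := by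
  constructor
  · rintro ⟨F', hsub, hcovF⟩
    exact xc_forward n m hn X hX F hF hcov F' hsub hcovF
  · rintro ⟨S, hSne, hconn, hC⟩
    exact xc_backward n m hn X hX F hF hcov S hSne hconn hC
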